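/- Fix for each n a perfect matching m*_n of the complete graph K_{2n}, and let D(n) be the number of perfect matchings m of K_{2n} with m ∩ m*_n = ∅. Then D(n)/(2n−1)!! converges to e^{−1/2} as n → ∞. -/

import Mathlib

/-- `(2k-1)!! = 1 * 3 * 5 * ... * (2k-1)`, with `(-1)!! = 1`. -/
def oddFactorial : ℕ → ℕ
  | 0 => 1
  | k + 1 => (2 * k + 1) * oddFactorial k

/-- A perfect matching of the complete graph on vertex set `{0, ..., 2n-1}`. -/
def IsPM (n : ℕ) (m : Finset (Finset ℕ)) : Prop :=
  (∀ e ∈ m, e.card = 2 ∧ e ⊆ Finset.range (2 * n)) ∧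
  ∀ v ∈ Finset.range (2 * n), ∃! e, e ∈ m ∧ v ∈ e

open Finset

/-- Perfect matching of a general vertex set `V`. -/
def IsPMof (V : Finset ℕ) (M : Finset (Finset ℕ)) : Prop :=
  (∀ e ∈ M, e.card = 2 ∧ e ⊆ V) ∧ ∀ v ∈ V, ∃! e, e ∈ M ∧ v ∈ e

open Classical in
noncomputable def PMs (V : Finset ℕ) : Finset (Finset (Finset ℕ)) :=
  V.powerset.powerset.filter (IsPMof V)

lemma mem_PMs {V : Finset ℕ} {M : Finset (Finset ℕ)} : M ∈ PMs V ↔ IsPMof V M := by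
  classical
  simp only [PMs, mem_filter, mem_powerset, and_iff_right_iff_imp]
  intro h
  intro e he
  simpa using (h.1 e he).2

lemma oddFactorial_pos (n : ℕ) : 0 < oddFactorial n := by
  induction n with
  | zero => simp [oddFactorial]
  | succ k ih =>
    show 0 < (2 * k + 1) * oddFactorial k
    exact Nat.mul_pos (by omega) ih

/-- distinct edges of a matching are disjoint -/
lemma IsPMof.eq_of_mem {V : Finset ℕ} {M : Finset (Finset ℕ)} (h : IsPMof V M)
    {e f : Finset ℕ} {v : ℕ} (he : e ∈ M) (hf : f ∈ M) (hv : v ∈ e) (hv' : v ∈ f) : e = f := by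
  have hvV : v ∈ V := (h.1 e he).2 hv
  obtain ⟨g, -, hg⟩ := h.2 v hvV
  rw [hg e ⟨he, hv⟩, hg f ⟨hf, hv'⟩]

lemma IsPMof.card_eq {V : Finset ℕ} {M : Finset (Finset ℕ)} (h : IsPMof V M) :
    2 * M.card = V.card := by
  classical
  have hV : V = M.biUnion id := by
    apply Finset.Subset.antisymm
    · intro v hv
      obtain ⟨e, ⟨he, hve⟩, -⟩ := h.2 v hv
      exact mem_biUnion.2 ⟨e, he, hve⟩
    · intro v hv
      obtain ⟨e, he, hve⟩ := mem_biUnion.1 hv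
      exact (h.1 e he).2 hve
  rw [hV, Finset.card_biUnion]
  · simp only [id]
    rw [Finset.sum_congr rfl (fun e he => (h.1 e he).1), Finset.sum_const, smul_eq_mul,
      Nat.mul_comm]
  · intro e he f hf hef
    rw [Function.onFun_apply, Finset.disjoint_left]
    intro v hv hv'
    exact hef (h.eq_of_mem he hf hv hv')

lemma IsPMof.diff {V : Finset ℕ} {M S : Finset (Finset ℕ)} (h : IsPMof V M) (hS : S ⊆ M) :
    IsPMof (V \ S.biUnion id) (M \ S) := by
  classical
  constructor
  · intro e he
    rw [mem_sdiff] at he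
    refine ⟨(h.1 e he.1).1, ?_⟩
    intro v hv
    rw [mem_sdiff]
    refine ⟨(h.1 e he.1).2 hv, ?_⟩
    intro hvb
    obtain ⟨f, hf, hvf⟩ := mem_biUnion.1 hvb
    exact he.2 (by rwa [h.eq_of_mem he.1 (hS hf) hv hvf])
  · intro v hv
    rw [mem_sdiff] at hv
    obtain ⟨e, ⟨he, hve⟩, hu⟩ := h.2 v hv.1
    have heS : e ∉ S := fun heS => hv.2 (mem_biUnion.2 ⟨e, heS, hve⟩)
    exact ⟨e, ⟨mem_sdiff.2 ⟨he, heS⟩, hve⟩, fun f ⟨hf, hvf⟩ => hu f ⟨(mem_sdiff.1 hf).1, hvf⟩⟩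

lemma IsPMof.union {V : Finset ℕ} {S N : Finset (Finset ℕ)}
    (h2 : ∀ e ∈ S, e.card = 2 ∧ e ⊆ V)
    (hdis : ∀ e ∈ S, ∀ f ∈ S, e ≠ f → Disjoint e f)
    (hN : IsPMof (V \ S.biUnion id) N) :
    IsPMof V (N ∪ S) := by
  classical
  constructor
  · intro e he
    rcases mem_union.1 he with he | he
    · exact ⟨(hN.1 e he).1, fun v hv => (mem_sdiff.1 ((hN.1 e he).2 hv)).1⟩
    · exact h2 e he
  · intro v hv
    by_cases hvb : v ∈ S.biUnion id
    · obtain ⟨f, hf, hvf⟩ := mem_biUnion.1 hvb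
      refine ⟨f, ⟨mem_union_right _ hf, hvf⟩, ?_⟩
      rintro e ⟨he, hve⟩
      rcases mem_union.1 he with he | he
      · exact absurd (mem_biUnion.2 ⟨f, hf, hvf⟩) (mem_sdiff.1 ((hN.1 e he).2 hve)).2
      · by_contra hef
        exact (Finset.disjoint_left.1 (hdis e he f hf hef) hve) hvf
    · obtain ⟨e, ⟨he, hve⟩, hu⟩ := hN.2 v (mem_sdiff.2 ⟨hv, hvb⟩)
      refine ⟨e, ⟨mem_union_left _ he, hve⟩, ?_⟩
      rintro f ⟨hf, hvf⟩
      rcases mem_union.1 hf with hf | hf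
      · exact hu f ⟨hf, hvf⟩
      · exact absurd (mem_biUnion.2 ⟨f, hf, hvf⟩) hvb

lemma card_filter_superset {V : Finset ℕ} {S : Finset (Finset ℕ)}
    (h2 : ∀ e ∈ S, e.card = 2 ∧ e ⊆ V)
    (hdis : ∀ e ∈ S, ∀ f ∈ S, e ≠ f → Disjoint e f) :
    ((PMs V).filter (fun M => S ⊆ M)).card = (PMs (V \ S.biUnion id)).card := by
  classical
  apply Finset.card_bij (fun M _ => M \ S)
  · intro M hM
    rw [mem_filter] at hM
    exact mem_PMs.2 ((mem_PMs.1 hM.1).diff hM.2)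
  · intro M hM M' hM' h
    rw [mem_filter] at hM hM'
    have := congrArg (· ∪ S) h
    simpa [Finset.sdiff_union_of_subset hM.2, Finset.sdiff_union_of_subset hM'.2] using this
  · intro N hN
    have hN' := mem_PMs.1 hN
    have hdisNS : Disjoint N S := by
      rw [Finset.disjoint_left]
      intro e heN heS
      have h1 : e ⊆ V \ S.biUnion id := (hN'.1 e heN).2
      have h2' : e ⊆ S.biUnion id := fun v hv => mem_biUnion.2 ⟨e, heS, hv⟩
      have : e.Nonempty := Finset.card_pos.1 (by rw [(hN'.1 e heN).1]; norm_num)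
      obtain ⟨v, hv⟩ := this
      exact (mem_sdiff.1 (h1 hv)).2 (h2' hv)
    refine ⟨N ∪ S, mem_filter.2 ⟨mem_PMs.2 (IsPMof.union h2 hdis hN'), subset_union_right⟩, ?_⟩
    rw [Finset.union_sdiff_right]
    exact Finset.sdiff_eq_self_of_disjoint hdisNS

lemma card_PMs : ∀ (m : ℕ) (V : Finset ℕ), V.card = 2 * m → (PMs V).card = oddFactorial m := by
  intro m
  induction m with
  | zero =>
    intro V hV
    have hVe : V = ∅ := Finset.card_eq_zero.1 (by simpa using hV)
    subst hVe
    have : PMs ∅ = {∅} := by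
      apply Finset.eq_singleton_iff_unique_mem.2
      constructor
      · exact mem_PMs.2 ⟨by simp, by simp⟩
      · intro M hM
        have h := mem_PMs.1 hM
        apply Finset.eq_empty_iff_forall_notMem.2
        intro e he
        have := (h.1 e he).1
        have h2 := (h.1 e he).2
        simp only [Finset.subset_empty] at h2
        simp [h2] at this
    simp [this, oddFactorial]
  | succ m ih =>
    intro V hV
    have hVne : V.Nonempty := Finset.card_pos.1 (by omega)
    obtain ⟨v, hv⟩ := hVne
    have hcover : PMs V = (V.erase v).biUnion
        (fun w => (PMs V).filter (fun M => ({v, w} : Finset ℕ) ∈ M)) := by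
      apply Finset.Subset.antisymm
      · intro M hM
        have h := mem_PMs.1 hM
        obtain ⟨e, ⟨he, hve⟩, -⟩ := h.2 v hv
        obtain ⟨a, b, hab, habe⟩ := Finset.card_eq_two.1 (h.1 e he).1
        have hsub : e ⊆ V := (h.1 e he).2
        rcases (by subst habe; simpa using hve : v = a ∨ v = b) with rfl | rfl
        · refine mem_biUnion.2 ⟨b, mem_erase.2 ⟨hab.symm, hsub (by simp [habe])⟩,
            mem_filter.2 ⟨hM, by rwa [← habe]⟩⟩
        · refine mem_biUnion.2 ⟨a, mem_erase.2 ⟨hab, hsub (by simp [habe])⟩,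
            mem_filter.2 ⟨hM, ?_⟩⟩
          have : ({v, a} : Finset ℕ) = e := by
            rw [habe]; ext x; simp; tauto
          rwa [this]
      · intro M hM
        obtain ⟨w, -, hMw⟩ := mem_biUnion.1 hM
        exact (mem_filter.1 hMw).1
    rw [hcover, Finset.card_biUnion]
    · have hfib : ∀ w ∈ V.erase v,
          ((PMs V).filter (fun M => ({v, w} : Finset ℕ) ∈ M)).card = oddFactorial m := by
        intro w hw
        have hwv : w ≠ v := (mem_erase.1 hw).1
        have hwV : w ∈ V := (mem_erase.1 hw).2
        have hcard2 : ({v, w} : Finset ℕ).card = 2 := by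
          rw [Finset.card_insert_of_notMem (by simpa using hwv.symm)]; simp
        have key : ((PMs V).filter (fun M => ({v, w} : Finset ℕ) ∈ M)).card
            = (PMs (V \ ({v, w} : Finset ℕ))).card := by
          have := card_filter_superset (V := V) (S := {({v, w} : Finset ℕ)})
            (by intro e he; simp only [Finset.mem_singleton] at he; subst he
                exact ⟨hcard2, by intro x hx; simp at hx; rcases hx with rfl | rfl <;>
                  assumption⟩)
            (by intro e he f hf hef; simp at he hf; subst he; subst hf; exact absurd rfl hef)
          simpa [Finset.filter_congr_decidable] using this
        rw [key, ih]
        rw [Finset.card_sdiff_of_subset (by intro x hx; simp at hx; rcases hx with rfl | rfl <;> assumption)]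
        rw [hcard2, hV]; omega
      rw [Finset.sum_congr rfl hfib, Finset.sum_const, Finset.card_erase_of_mem hv, hV,
        smul_eq_mul]
      show (2 * (m + 1) - 1) * oddFactorial m = oddFactorial (m + 1)
      have h21 : 2 * (m + 1) - 1 = 2 * m + 1 := by omega
      rw [h21]; rfl
    · intro w hw w' hw' hww'
      rw [Function.onFun_apply, Finset.disjoint_left]
      intro M hM hM'
      have h1 := (mem_filter.1 hM).2
      have h2 := (mem_filter.1 hM').2
      have hPM := mem_PMs.1 (mem_filter.1 hM).1
      have : ({v, w} : Finset ℕ) = {v, w'} :=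
        hPM.eq_of_mem h1 h2 (Finset.mem_insert_self v _) (Finset.mem_insert_self v _)
      apply hww'
      have hwv : w ≠ v := (mem_erase.1 hw).1
      have hw'v : w' ≠ v := (mem_erase.1 hw').1
      have hwmem : w ∈ ({v, w'} : Finset ℕ) := this ▸ (by simp : w ∈ ({v, w} : Finset ℕ))
      simpa [hwv] using hwmem

lemma card_PMs_superset {n : ℕ} {V : Finset ℕ} (hV : V.card = 2 * n)
    {S : Finset (Finset ℕ)}
    (h2 : ∀ e ∈ S, e.card = 2 ∧ e ⊆ V)
    (hdis : ∀ e ∈ S, ∀ f ∈ S, e ≠ f → Disjoint e f) :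
    ((PMs V).filter (fun M => S ⊆ M)).card = oddFactorial (n - S.card) := by
  classical
  rw [card_filter_superset h2 hdis]
  have hbu : (S.biUnion id).card = 2 * S.card := by
    rw [Finset.card_biUnion (by intro e he f hf hef; exact hdis e he f hf hef)]
    simp only [id]
    rw [Finset.sum_congr rfl (fun e he => (h2 e he).1), Finset.sum_const, smul_eq_mul,
      Nat.mul_comm]
  have hsub : S.biUnion id ⊆ V := by
    intro v hv
    obtain ⟨e, he, hve⟩ := Finset.mem_biUnion.1 hv
    exact (h2 e he).2 hve
  have hle : S.card ≤ n := by
    have := Finset.card_le_card hsub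
    omega
  apply card_PMs
  rw [Finset.card_sdiff_of_subset hsub, hbu, hV]
  omega

lemma IE (n : ℕ) (A : Finset (Finset ℕ)) (hA : IsPMof (Finset.range (2 * n)) A) :
    ((((PMs (Finset.range (2 * n))).filter (fun M => M ∩ A = ∅)).card : ℤ))
      = ∑ k ∈ Finset.range (n + 1),
        (-1 : ℤ) ^ k * (n.choose k : ℤ) * (oddFactorial (n - k) : ℤ) := by
  classical
  set P := PMs (Finset.range (2 * n)) with hP
  have hAcard : A.card = n := by have := hA.card_eq; rw [Finset.card_range] at this; omega
  have step1 : ((P.filter (fun M => M ∩ A = ∅)).card : ℤ)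
      = ∑ M ∈ P, if M ∩ A = ∅ then (1 : ℤ) else 0 := by
    rw [Finset.card_filter]
    push_cast
    exact Finset.sum_congr rfl (fun M _ => by split <;> simp)
  have step2 : ∀ M : Finset (Finset ℕ), (if M ∩ A = ∅ then (1 : ℤ) else 0)
      = ∑ S ∈ A.powerset, if S ⊆ M then (-1 : ℤ) ^ S.card else 0 := by
    intro M
    have hps : (A ∩ M).powerset = A.powerset.filter (fun S => S ⊆ M) := by
      ext S
      simp only [Finset.mem_powerset, Finset.mem_filter, Finset.subset_inter_iff]
    rw [← Finset.sum_filter, ← hps, Finset.sum_powerset_neg_one_pow_card]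
    rw [Finset.inter_comm]
  rw [step1, Finset.sum_congr rfl (fun M _ => step2 M), Finset.sum_comm]
  have step3 : ∀ S ∈ A.powerset,
      (∑ M ∈ P, if S ⊆ M then (-1 : ℤ) ^ S.card else 0)
        = (-1 : ℤ) ^ S.card * oddFactorial (n - S.card) := by
    intro S hS
    rw [Finset.mem_powerset] at hS
    have hcount : (P.filter (fun M => S ⊆ M)).card = oddFactorial (n - S.card) := by
      apply card_PMs_superset (by simp)
      · intro e he; exact hA.1 e (hS he)
      · intro e he f hf hef
        rw [Finset.disjoint_left]
        intro v hv hv'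
        exact hef (hA.eq_of_mem (hS he) (hS hf) hv hv')
    calc (∑ M ∈ P, if S ⊆ M then (-1 : ℤ) ^ S.card else 0)
        = ((P.filter (fun M => S ⊆ M)).card : ℤ) * (-1 : ℤ) ^ S.card := by
          rw [← Finset.sum_filter, Finset.sum_const, nsmul_eq_mul]
      _ = (-1 : ℤ) ^ S.card * oddFactorial (n - S.card) := by rw [hcount]; push_cast; ring
  rw [Finset.sum_congr rfl step3]
  have := Finset.sum_powerset_apply_card
    (f := fun k => (-1 : ℤ) ^ k * oddFactorial (n - k)) (x := A)
  rw [this, hAcard]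
  apply Finset.sum_congr rfl
  intro k hk
  rw [nsmul_eq_mul]
  push_cast
  ring

open Filter
open scoped Topology

lemma descOdd_le (n k : ℕ) : n.descFactorial k * oddFactorial (n - k) ≤ oddFactorial n := by
  induction k with
  | zero => simp
  | succ k ih =>
    rcases le_or_gt n k with h | h
    · rw [Nat.descFactorial_succ]
      have h0 : n - k = 0 := by omega
      simp [h0]
    · rw [Nat.descFactorial_succ]
      have h1 : n - (k + 1) = (n - k) - 1 := by omega
      have h2 : oddFactorial (n - k) = (2 * (n - k - 1) + 1) * oddFactorial (n - k - 1) := by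
        have hnk : n - k = (n - k - 1) + 1 := by omega
        rw [hnk]; rfl
      calc (n - k) * n.descFactorial k * oddFactorial (n - (k + 1))
          = n.descFactorial k * ((n - k) * oddFactorial (n - k - 1)) := by rw [h1]; ring
        _ ≤ n.descFactorial k * ((2 * (n - k - 1) + 1) * oddFactorial (n - k - 1)) := by
            gcongr; omega
        _ = n.descFactorial k * oddFactorial (n - k) := by rw [← h2]
        _ ≤ oddFactorial n := ih

lemma aux_half : Tendsto (fun n : ℕ => ((n : ℝ) + 1) / (2 * n + 1)) atTop (𝓝 (1 / 2 : ℝ)) := by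
  have h : ∀ n : ℕ, ((n : ℝ) + 1) / (2 * (n : ℝ) + 1) = 1 / (2 - 1 / ((n : ℝ) + 1)) := by
    intro n
    have hn : ((n : ℝ) + 1) ≠ 0 := by positivity
    have h2 : 2 - 1 / ((n : ℝ) + 1) = (2 * (n : ℝ) + 1) / ((n : ℝ) + 1) := by
      field_simp; ring
    rw [h2, one_div_div]
  simp only [h]
  have h0 : Tendsto (fun n : ℕ => 1 / ((n : ℝ) + 1)) atTop (𝓝 0) :=
    tendsto_one_div_add_atTop_nhds_zero_nat
  have hlim : Tendsto (fun n : ℕ => 2 - 1 / ((n : ℝ) + 1)) atTop (𝓝 2) := by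
    have := (tendsto_const_nhds (x := (2 : ℝ)) (f := atTop)).sub h0
    simpa using this
  have := hlim.inv₀ two_ne_zero
  simpa [one_div] using this

lemma tendsto_ratio (k : ℕ) :
    Tendsto (fun n : ℕ => ((n.descFactorial k : ℝ) * oddFactorial (n - k)) / oddFactorial n)
      atTop (𝓝 ((1 / 2 : ℝ) ^ k)) := by
  induction k with
  | zero =>
    have h : ∀ n : ℕ, ((n.descFactorial 0 : ℝ) * oddFactorial (n - 0)) / oddFactorial n = 1 := by
      intro n
      have : (oddFactorial n : ℝ) ≠ 0 := by
        exact_mod_cast (oddFactorial_pos n).ne'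
      simp [div_self this]
    simp only [h, pow_zero]
    exact tendsto_const_nhds
  | succ k ih =>
    rw [← tendsto_add_atTop_iff_nat 1]
    have heq : (fun n : ℕ =>
        (((n + 1).descFactorial (k + 1) : ℝ) * oddFactorial ((n + 1) - (k + 1)))
          / oddFactorial (n + 1))
        = fun n : ℕ => (((n : ℝ) + 1) / (2 * n + 1)) *
            (((n.descFactorial k : ℝ) * oddFactorial (n - k)) / oddFactorial n) := by
      funext n
      have h1 : (n + 1).descFactorial (k + 1) = (n + 1) * n.descFactorial k :=
        Nat.succ_descFactorial_succ n k
      have h2 : (n + 1) - (k + 1) = n - k := by omega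
      have h3 : oddFactorial (n + 1) = (2 * n + 1) * oddFactorial n := rfl
      rw [h1, h2, h3]
      have hodd : (oddFactorial n : ℝ) ≠ 0 := by exact_mod_cast (oddFactorial_pos n).ne'
      have h2n : (2 * (n : ℝ) + 1) ≠ 0 := by positivity
      push_cast
      field_simp
    rw [heq]
    have := aux_half.mul ih
    have hpow : (1 / 2 : ℝ) * (1 / 2 : ℝ) ^ k = (1 / 2 : ℝ) ^ (k + 1) := by ring
    rwa [hpow] at this

lemma summable_bound : Summable (fun k : ℕ => (1 : ℝ) / k.factorial) := by
  have h := (NormedSpace.expSeries_div_hasSum_exp (1 : ℝ)).summable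
  simp only [one_pow] at h
  exact h


theorem derangement_ratio_tendsto (mstar : ℕ → Finset (Finset ℕ))
    (hmstar : ∀ n, IsPM n (mstar n)) :
    Filter.Tendsto
      (fun n : ℕ =>
        ((({m | IsPM n m ∧ m ∩ mstar n = ∅} : Set (Finset (Finset ℕ))).ncard : ℝ) /
          (oddFactorial n : ℝ)))
      Filter.atTop (nhds (Real.exp (-(1 / 2)))) := by
  classical
  -- translate the set cardinality to a Finset cardinality
  have hset : ∀ n, ({m | IsPM n m ∧ m ∩ mstar n = ∅} : Set (Finset (Finset ℕ))).ncard
      = ((PMs (Finset.range (2 * n))).filter (fun M => M ∩ mstar n = ∅)).card := by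
    intro n
    have : ({m | IsPM n m ∧ m ∩ mstar n = ∅} : Set (Finset (Finset ℕ)))
        = ↑((PMs (Finset.range (2 * n))).filter (fun M => M ∩ mstar n = ∅)) := by
      ext M
      simp only [Set.mem_setOf_eq, Finset.coe_filter, Set.mem_setOf_eq, mem_PMs]
      exact Iff.rfl
    rw [this, Set.ncard_coe_finset]
  -- the summands
  set g : ℕ → ℕ → ℝ := fun n k =>
    (-1 : ℝ) ^ k * (n.choose k : ℝ) * (oddFactorial (n - k) : ℝ) / oddFactorial n with hg
  have hodd : ∀ n : ℕ, (oddFactorial n : ℝ) ≠ 0 := fun n => by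
    exact_mod_cast (oddFactorial_pos n).ne'
  -- the ratio equals a tsum
  have hratio : ∀ n : ℕ,
      ((({m | IsPM n m ∧ m ∩ mstar n = ∅} : Set (Finset (Finset ℕ))).ncard : ℝ) /
        (oddFactorial n : ℝ)) = ∑' k, g n k := by
    intro n
    have hIE := IE n (mstar n) (hmstar n)
    have hIE' : ((((PMs (Finset.range (2 * n))).filter
        (fun M => M ∩ mstar n = ∅)).card : ℝ))
        = ∑ k ∈ Finset.range (n + 1),
          (-1 : ℝ) ^ k * (n.choose k : ℝ) * (oddFactorial (n - k) : ℝ) := by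
      have := congrArg (fun z : ℤ => (z : ℝ)) hIE
      push_cast at this
      exact this
    rw [hset n, hIE', Finset.sum_div]
    have hz : ∀ k ∉ Finset.range (n + 1), g n k = 0 := by
      intro k hk
      rw [Finset.mem_range] at hk
      have : n.choose k = 0 := Nat.choose_eq_zero_of_lt (by omega)
      simp [hg, this]
    rw [tsum_eq_sum hz]
  simp only [hratio]
  -- dominated convergence
  have hfinal : Tendsto (fun n : ℕ => ∑' k, g n k) atTop
      (𝓝 (∑' k, ((-(1 / 2) : ℝ)) ^ k / k.factorial)) := by
    apply tendsto_tsum_of_dominated_convergence (bound := fun k : ℕ => (1 : ℝ) / k.factorial)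
      summable_bound
    · intro k
      have hdesc : ∀ n : ℕ, g n k
          = ((-1 : ℝ) ^ k / k.factorial) *
            (((n.descFactorial k : ℝ) * oddFactorial (n - k)) / oddFactorial n) := by
        intro n
        have h1 : (n.descFactorial k : ℝ) = (k.factorial : ℝ) * n.choose k := by
          exact_mod_cast Nat.descFactorial_eq_factorial_mul_choose n k
        have hk : (k.factorial : ℝ) ≠ 0 := by exact_mod_cast k.factorial_ne_zero
        show (-1 : ℝ) ^ k * (n.choose k : ℝ) * (oddFactorial (n - k) : ℝ) / oddFactorial n = _
        rw [h1]
        field_simp [hodd n]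
      simp only [hdesc]
      have := (tendsto_const_nhds (x := ((-1 : ℝ) ^ k / k.factorial)) (f := atTop)).mul
        (tendsto_ratio k)
      have heq : ((-1 : ℝ) ^ k / k.factorial) * (1 / 2 : ℝ) ^ k
          = ((-(1 / 2) : ℝ)) ^ k / k.factorial := by
        rw [div_mul_eq_mul_div, ← mul_pow]
        norm_num
      rwa [heq] at this
    · filter_upwards with n
      intro k
      have hb : (n.descFactorial k : ℝ) * oddFactorial (n - k) ≤ oddFactorial n := by
        exact_mod_cast descOdd_le n k
      have h1 : (n.descFactorial k : ℝ) = (k.factorial : ℝ) * n.choose k := by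
        exact_mod_cast Nat.descFactorial_eq_factorial_mul_choose n k
      have hoddpos : (0 : ℝ) < oddFactorial n := by exact_mod_cast oddFactorial_pos n
      have hkpos : (0 : ℝ) < k.factorial := by exact_mod_cast k.factorial_pos
      show ‖(-1 : ℝ) ^ k * (n.choose k : ℝ) * (oddFactorial (n - k) : ℝ) / oddFactorial n‖ ≤ _
      rw [Real.norm_eq_abs, abs_div, abs_mul, abs_mul, abs_pow, abs_neg, abs_one, one_pow,
        one_mul, abs_of_nonneg (by positivity : (0:ℝ) ≤ (n.choose k : ℝ)),
        abs_of_nonneg (by positivity : (0:ℝ) ≤ (oddFactorial (n-k) : ℝ)),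
        abs_of_nonneg (by positivity : (0:ℝ) ≤ (oddFactorial n : ℝ))]
      rw [div_le_div_iff₀ hoddpos hkpos]
      calc (n.choose k : ℝ) * oddFactorial (n - k) * k.factorial
          = (n.descFactorial k : ℝ) * oddFactorial (n - k) := by rw [h1]; ring
        _ ≤ oddFactorial n := hb
        _ = 1 * oddFactorial n := by ring
  have hexp : (∑' k, ((-(1 / 2) : ℝ)) ^ k / k.factorial) = Real.exp (-(1 / 2)) := by
    rw [Real.exp_eq_exp_ℝ]
    exact (NormedSpace.expSeries_div_hasSum_exp (-(1 / 2) : ℝ)).tsum_eq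
  rwa [hexp] at hfinal
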